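/- Let B(x,y) = (x-y)/(e^x - e^y) as a two-variable formal power series, and define B^{(R)}(x,y,z) = (B(x,y) - B(x,z))/(y - z) and B^{(L)}(x,y,z) = (B(x,z) - B(y,z))/(x - y) (both are formal power series since the numerators vanish on the respective diagonals). Then B^{(R)}(x,y,z) * B(y,z) = B(x,y) * B^{(L)}(x,y,z). -/

import Mathlib

open MvPowerSeries

/-- The exponential `e^{x_i}` of a single variable, as a formal power series
in three commuting variables over `ℚ`. -/
noncomputable def expX (i : Fin 3) : MvPowerSeries (Fin 3) ℚ :=
  fun s => if s = Finsupp.single i (s i) then (1 : ℚ) / (s i).factorial else 0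

lemma X_sub_X_ne {i j : Fin 3} (hij : i ≠ j) :
    (MvPowerSeries.X i - MvPowerSeries.X j : MvPowerSeries (Fin 3) ℚ) ≠ 0 := by
  intro h
  have := congrArg (MvPowerSeries.coeff (R := ℚ) (Finsupp.single i 1)) h
  simp [MvPowerSeries.coeff_X, Finsupp.single_left_inj (one_ne_zero : (1 : ℕ) ≠ 0), hij] at this

/-- With `B(x,y) = (x-y)/(e^x-e^y)` (characterized by `B(x,y)(e^x-e^y) = x-y`,
and similarly `B(x,z)`, `B(y,z)`), and the divided differences
`B^{(R)}(x,y,z) = (B(x,y)-B(x,z))/(y-z)` and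
`B^{(L)}(x,y,z) = (B(x,z)-B(y,z))/(x-y)`, one has
`B^{(R)}(x,y,z) B(y,z) = B(x,y) B^{(L)}(x,y,z)` as formal power series. -/
theorem stmt_4 (B01 B02 B12 BR BL : MvPowerSeries (Fin 3) ℚ)
    (h01 : B01 * (expX 0 - expX 1) = MvPowerSeries.X 0 - MvPowerSeries.X 1)
    (h02 : B02 * (expX 0 - expX 2) = MvPowerSeries.X 0 - MvPowerSeries.X 2)
    (h12 : B12 * (expX 1 - expX 2) = MvPowerSeries.X 1 - MvPowerSeries.X 2)
    (hR : BR * (MvPowerSeries.X 1 - MvPowerSeries.X 2) = B01 - B02)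
    (hL : BL * (MvPowerSeries.X 0 - MvPowerSeries.X 1) = B02 - B12) :
    BR * B12 = B01 * BL := by
  set d1 : MvPowerSeries (Fin 3) ℚ := MvPowerSeries.X 0 - MvPowerSeries.X 1 with hd1
  set d2 : MvPowerSeries (Fin 3) ℚ := MvPowerSeries.X 1 - MvPowerSeries.X 2 with hd2
  set E1 : MvPowerSeries (Fin 3) ℚ := expX 0 - expX 1 with hE1
  set E2 : MvPowerSeries (Fin 3) ℚ := expX 1 - expX 2 with hE2
  set E3 : MvPowerSeries (Fin 3) ℚ := expX 0 - expX 2 with hE3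
  have hd1ne : d1 ≠ 0 := X_sub_X_ne (by decide)
  have hd2ne : d2 ≠ 0 := X_sub_X_ne (by decide)
  have hd3ne : (MvPowerSeries.X 0 - MvPowerSeries.X 2 : MvPowerSeries (Fin 3) ℚ) ≠ 0 :=
    X_sub_X_ne (by decide)
  have hE1ne : E1 ≠ 0 := by
    intro h; rw [h, mul_zero] at h01; exact hd1ne h01.symm
  have hE2ne : E2 ≠ 0 := by
    intro h; rw [h, mul_zero] at h12; exact hd2ne h12.symm
  have hE3ne : E3 ≠ 0 := by
    intro h; rw [h, mul_zero] at h02; exact hd3ne h02.symm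
  have key : (BR * B12 - B01 * BL) * (d1 * d2 * (E1 * E2 * E3)) = 0 := by
    rw [hd1, hd2, hE1, hE2, hE3]
    linear_combination (B12 * d1 * E1 * E2 * E3) * hR + (- B01 * d2 * E1 * E2 * E3) * hL
      + (B12 * d1 * E2 * E3 - (d1 + d2) * d2 * E2 + d2 ^ 2 * E3) * h01
      + (- d1 * d2 * E1 - B01 * d2 * E1 * E2) * h02
      + (d1 ^ 2 * E3 - B02 * d1 * E1 * E3 + B01 * d2 * E1 * E3) * h12
  have hne : d1 * d2 * (E1 * E2 * E3) ≠ 0 := by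
    exact mul_ne_zero (mul_ne_zero hd1ne hd2ne) (mul_ne_zero (mul_ne_zero hE1ne hE2ne) hE3ne)
  rcases mul_eq_zero.mp key with h | h
  · exact sub_eq_zero.mp h
  · exact absurd h hne
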